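/- Let 𝒴 be a finite set, let p and c be probability mass functions on 𝒴, and let π ∈ [0,1) be such that p(y) − π·c(y) > 0 for every y ∈ 𝒴. Then Σ_{y∈𝒴} c(y) · log( p(y) / (p(y) − π·c(y)) ) ≥ log( 1/(1−π) ). -/

import Mathlib

open Finset

/-- Let `𝒴` be finite, `p, c` pmfs on `𝒴`, and `π ∈ [0,1)`
with `p(y) − π·c(y) > 0` for all `y`.  Then
`Σ_y c(y)·log(p(y)/(p(y) − π·c(y))) ≥ log(1/(1−π))`. -/
theorem jensen_drift_step
    {Y : Type*} [Fintype Y]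
    (p c : Y → ℝ)
    (hp : ∀ y, 0 ≤ p y) (hpsum : ∑ y, p y = 1)
    (hc : ∀ y, 0 ≤ c y) (hcsum : ∑ y, c y = 1)
    (π : ℝ) (hπ0 : 0 ≤ π) (hπ1 : π < 1)
    (hpos : ∀ y, 0 < p y - π * c y) :
    Real.log (1 / (1 - π)) ≤ ∑ y, c y * Real.log (p y / (p y - π * c y)) := by
  have hppos : ∀ y, 0 < p y := by
    intro y
    rcases lt_or_eq_of_le (hp y) with h | h
    · exact h
    · exfalso
      have := hpos y
      nlinarith [mul_nonneg hπ0 (hc y)]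
  set x : Y → ℝ := fun y => (p y - π * c y) / p y with hx
  have hxpos : ∀ y, 0 < x y := fun y => div_pos (hpos y) (hppos y)
  -- Jensen: ∑ c y * log (x y) ≤ log (∑ c y * x y)
  have hjensen : ∑ y, c y * Real.log (x y) ≤ Real.log (∑ y, c y * x y) := by
    have := (strictConcaveOn_log_Ioi.concaveOn).le_map_sum
      (t := Finset.univ) (w := c) (p := x) (fun y _ => hc y) hcsum
      (fun y _ => hxpos y)
    simpa using this
  -- bound ∑ c y * x y ≤ 1 - π using Cauchy–Schwarz (Sedrakyan)
  have hcs : (1 : ℝ) ≤ ∑ y, (c y) ^ 2 / p y := by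
    have := sq_sum_div_le_sum_sq_div Finset.univ c (fun y _ => hppos y)
    rw [hcsum, hpsum] at this
    simpa using this
  have hsum_eq : ∑ y, c y * x y = 1 - π * ∑ y, (c y) ^ 2 / p y := by
    have hterm : ∀ y, c y * x y = c y - π * ((c y) ^ 2 / p y) := by
      intro y
      field_simp [hx, (hppos y).ne']
      simp only [hx]
      rw [mul_assoc, div_mul_cancel₀ _ (hppos y).ne']
      ring
    rw [Finset.sum_congr rfl (fun y _ => hterm y), Finset.sum_sub_distrib, hcsum,
      ← Finset.mul_sum]
  have hle : ∑ y, c y * x y ≤ 1 - π := by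
    rw [hsum_eq]
    nlinarith
  have hsumpos : 0 < ∑ y, c y * x y := by
    have hex : ∃ y : Y, 0 < c y := by
      by_contra h
      push_neg at h
      have : ∑ y, c y = 0 := Finset.sum_eq_zero (fun y _ => le_antisymm (h y) (hc y))
      rw [hcsum] at this; norm_num at this
    obtain ⟨y0, hy0⟩ := hex
    apply Finset.sum_pos' (fun y _ => mul_nonneg (hc y) (hxpos y).le)
    exact ⟨y0, Finset.mem_univ y0, mul_pos hy0 (hxpos y0)⟩
  have hlog : Real.log (∑ y, c y * x y) ≤ Real.log (1 - π) :=
    Real.log_le_log hsumpos hle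
  have hflip : ∀ y, Real.log (p y / (p y - π * c y)) = - Real.log (x y) := by
    intro y
    rw [hx]
    rw [← Real.log_inv]
    congr 1
    field_simp
  have : ∑ y, c y * Real.log (p y / (p y - π * c y))
      = - ∑ y, c y * Real.log (x y) := by
    rw [← Finset.sum_neg_distrib]
    apply Finset.sum_congr rfl
    intro y _
    rw [hflip y]; ring
  rw [this, Real.log_div one_ne_zero (by linarith), Real.log_one]
  linarith
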